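/- Let q : ℤ → ℚ be a quasipolynomial, i.e., q(t) = Σ_{i=0}^{n} cᵢ(t) tⁱ with each cᵢ : ℤ → ℚ periodic. Then for any positive integer a and integers b, the function t ↦ Σ_{k=0}^{⌊t/a⌋} q(b - k) is again a quasipolynomial in t (of degree at most n+1), for t ranging over nonnegative integers. -/

import Mathlib

/-- A quasipolynomial of degree at most `n`: a function of the form
`∑ i ≤ n, cᵢ(t) tⁱ` with each `cᵢ` periodic. -/
def IsQuasiPolynomial (n : ℕ) (q : ℤ → ℚ) : Prop :=
  ∃ (c : ℕ → ℤ → ℚ) (p : ℤ), 0 < p ∧ (∀ i, ∀ t : ℤ, c i (t + p) = c i t) ∧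
    ∀ t : ℤ, q t = ∑ i ∈ Finset.range (n + 1), c i t * (t : ℚ) ^ i

open Polynomial Finset

lemma per_int {c : ℤ → ℚ} {p : ℤ} (h : ∀ t, c (t + p) = c t) :
    ∀ (k : ℤ) (t : ℤ), c (t + k * p) = c t := by
  intro k
  induction k using Int.induction_on with
  | zero => simp
  | succ k ih =>
    intro t
    have h1 : t + ((k : ℤ) + 1) * p = (t + p) + k * p := by ring
    rw [h1, ih, h]
  | pred k ih =>
    intro t
    have h1 : t + (-(k : ℤ) - 1) * p = (t - p) + (-k) * p := by ring
    have h2 : c t = c (t - p) := by rw [← h (t - p)]; ring_nf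
    rw [h1, ih, ← h2]

lemma per_emod {c : ℤ → ℚ} {p : ℤ} (h : ∀ t, c (t + p) = c t) (t : ℤ) :
    c t = c (t % p) := by
  have h2 := per_int h (t / p) (t % p)
  rw [Int.emod_add_ediv_mul t p] at h2
  exact h2

lemma antideriv : ∀ (n : ℕ) (g : ℚ[X]), g.natDegree ≤ n →
    ∃ G : ℚ[X], G.natDegree ≤ n + 1 ∧ ∀ x : ℚ, G.eval (x + 1) - G.eval x = g.eval x := by
  intro n
  induction n with
  | zero =>
    intro g hg
    obtain ⟨cc, rfl⟩ := Polynomial.natDegree_eq_zero.mp (Nat.le_zero.mp hg)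
    refine ⟨C cc * X, ?_, fun x => by simp; ring⟩
    exact le_trans (natDegree_C_mul_le _ _) (by simp)
  | succ n ih =>
    intro g hg
    set cc := g.coeff (n + 1) with hcc
    set D : ℚ[X] := C (cc / (n + 2)) * ((X + 1) ^ (n + 2) - X ^ (n + 2)) with hD
    have hDco : ∀ m : ℕ, D.coeff m
        = cc / (n + 2) * (((n + 2).choose m : ℚ) - if n + 2 = m then 1 else 0) := by
      intro m
      rw [hD, coeff_C_mul, coeff_sub, coeff_X_add_one_pow, coeff_X_pow]
      congr 1
      simp [eq_comm]
    have hn2 : ((n : ℚ) + 2) ≠ 0 := by positivity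
    have hDdeg : D.natDegree ≤ n + 1 := by
      rw [natDegree_le_iff_coeff_eq_zero]
      intro N hN
      rw [hDco]
      rcases eq_or_lt_of_le (Nat.succ_le_of_lt hN) with h1 | h1
      · rw [← h1]; simp
      · rw [Nat.choose_eq_zero_of_lt h1, if_neg (by omega)]; simp
    have hDtop : D.coeff (n + 1) = cc := by
      rw [hDco, if_neg (by omega), Nat.choose_succ_self_right]
      push_cast
      rw [sub_zero]
      rw [show ((n : ℚ) + 1 + 1) = (n : ℚ) + 2 by ring, div_mul_cancel₀ _ hn2]
    have hsub : (g - D).natDegree ≤ n := by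
      rw [natDegree_le_iff_coeff_eq_zero]
      intro N hN
      rw [coeff_sub]
      rcases eq_or_lt_of_le (Nat.succ_le_of_lt hN) with h1 | h1
      · rw [← h1, hDtop, hcc, sub_self]
      · rw [coeff_eq_zero_of_natDegree_lt (lt_of_le_of_lt hg h1),
          coeff_eq_zero_of_natDegree_lt (lt_of_le_of_lt hDdeg h1), sub_self]
    obtain ⟨G', hG'deg, hG'⟩ := ih (g - D) hsub
    refine ⟨G' + C (cc / (n + 2)) * X ^ (n + 2), ?_, ?_⟩
    · refine le_trans (natDegree_add_le _ _) (max_le (by omega) ?_)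
      exact le_trans (natDegree_C_mul_le _ _) (by simp)
    · intro x
      have h1 := hG' x
      simp only [eval_add, eval_sub, eval_mul, eval_C, eval_X, eval_pow, eval_one, hD] at h1 ⊢
      linarith

lemma match_from_diff {u : ℤ → ℚ} {g : ℚ[X]} {n : ℕ} (hg : g.natDegree ≤ n)
    (hdiff : ∀ s : ℤ, 0 ≤ s → u (s + 1) - u s = g.eval (s : ℚ)) :
    ∃ U : ℚ[X], U.natDegree ≤ n + 1 ∧ ∀ s : ℤ, 0 ≤ s → u s = U.eval (s : ℚ) := by
  obtain ⟨G, hGdeg, hG⟩ := antideriv n g hg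
  refine ⟨G + C (u 0 - G.eval 0), le_trans (natDegree_add_le _ _) (by simp [hGdeg]), ?_⟩
  intro s hs
  have key : u s = G.eval (s : ℚ) + (u 0 - G.eval 0) := by
    refine Int.le_induction (motive := fun k _ => u k = G.eval (k : ℚ) + (u 0 - G.eval 0)) (by push_cast; ring) (fun k hk ihk => ?_) s hs
    have h1 := hdiff k hk
    have h2 := hG (k : ℚ)
    push_cast
    push_cast at ihk h1
    linarith
  simpa [eval_add] using key

def Saux (q : ℤ → ℚ) (b : ℤ) (m : ℤ) : ℚ := ∑ k ∈ Finset.range (m.toNat + 1), q (b - k)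

lemma claim_aux {n : ℕ} {q : ℤ → ℚ} {c : ℕ → ℤ → ℚ} {p : ℤ} (hp : 0 < p)
    (hcper : ∀ i, ∀ t : ℤ, c i (t + p) = c i t)
    (hcq : ∀ t : ℤ, q t = ∑ i ∈ Finset.range (n + 1), c i t * (t : ℚ) ^ i)
    {a : ℤ} (ha : 0 < a) (b : ℤ) (r : ℤ) :
    ∃ W : ℚ[X], W.natDegree ≤ n + 1 ∧
      ∀ t : ℤ, 0 ≤ t → t % (a * p) = r % (a * p) →
        Saux q b (t / a) = W.eval (t : ℚ) := by
  set P : ℤ := a * p with hP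
  have hPpos : 0 < P := mul_pos ha hp
  set m1 : ℤ := ((r % P) / a) % p with hm1
  have hm1nn : 0 ≤ m1 := Int.emod_nonneg _ hp.ne'
  have hm1lt : m1 < p := Int.emod_lt_of_pos _ hp
  set g : ℚ[X] := ∑ j ∈ Finset.range p.toNat, ∑ i ∈ Finset.range (n + 1),
      C (c i (b - (m1 + 1 + j))) * (C ((b : ℚ) - (m1 + 1 + j)) - C (p : ℚ) * X) ^ i with hg
  have hgdeg : g.natDegree ≤ n := by
    refine natDegree_sum_le_of_forall_le _ _ fun j _ => ?_
    refine natDegree_sum_le_of_forall_le _ _ fun i hi => ?_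
    refine le_trans (natDegree_C_mul_le _ _) (le_trans natDegree_pow_le ?_)
    have h1 : (C ((b : ℚ) - (m1 + 1 + j)) - C (p : ℚ) * X).natDegree ≤ 1 :=
      le_trans (natDegree_sub_le _ _)
        (max_le (by rw [natDegree_C]; omega) (le_trans (natDegree_C_mul_le _ _) (by simp)))
    have hi' : i ≤ n := by simpa [Nat.lt_succ_iff] using Finset.mem_range.mp hi
    calc i * _ ≤ i * 1 := Nat.mul_le_mul_left _ h1
    _ = i := mul_one i
    _ ≤ n := hi'
  have hdiff : ∀ s : ℤ, 0 ≤ s →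
      Saux q b (m1 + p * (s + 1)) - Saux q b (m1 + p * s) = g.eval (s : ℚ) := by
    intro s hs
    have hMnn : 0 ≤ m1 + p * s := add_nonneg hm1nn (mul_nonneg hp.le hs)
    have h1 : m1 + p * (s + 1) = (m1 + p * s) + p := by ring
    have h2 : ((m1 + p * s) + p).toNat + 1 = ((m1 + p * s).toNat + 1) + p.toNat := by omega
    rw [h1]
    simp only [Saux]
    rw [h2, Finset.sum_range_add, add_sub_cancel_left, hg, eval_finset_sum]
    refine Finset.sum_congr rfl fun j hj => ?_
    have hjp : (j : ℤ) < p := by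
      have := Finset.mem_range.mp hj; omega
    have hcast : ((((m1 + p * s).toNat + 1 + j : ℕ)) : ℤ) = (m1 + p * s) + 1 + j := by
      push_cast; omega
    rw [hcast, hcq]
    rw [eval_finset_sum]
    refine Finset.sum_congr rfl fun i hi => ?_
    have hper : c i (b - ((m1 + p * s) + 1 + j)) = c i (b - (m1 + 1 + j)) := by
      have h3 : b - ((m1 + p * s) + 1 + j) = (b - (m1 + 1 + j)) + (-s) * p := by ring
      rw [h3, per_int (hcper i)]
    rw [hper]
    simp only [eval_mul, eval_pow, eval_sub, eval_C, eval_X]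
    congr 1
    push_cast
    ring
  obtain ⟨U, hUdeg, hU⟩ := match_from_diff (u := fun s => Saux q b (m1 + p * s)) hgdeg hdiff
  refine ⟨U.comp (C (((a : ℚ) * p)⁻¹) * (X - C ((a * m1 + r % a : ℤ) : ℚ))), ?_, ?_⟩
  · refine le_trans natDegree_comp_le ?_
    have h1 : (C (((a : ℚ) * p)⁻¹) * (X - C ((a * m1 + r % a : ℤ) : ℚ))).natDegree ≤ 1 :=
      le_trans (natDegree_C_mul_le _ _) (le_of_eq (natDegree_X_sub_C _))
    calc U.natDegree * _ ≤ (n + 1) * 1 := Nat.mul_le_mul hUdeg h1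
    _ = n + 1 := mul_one _
  · intro t ht hmod
    have hmnn : 0 ≤ t / a := Int.ediv_nonneg ht ha.le
    have hta : t % a = r % a := by
      have hdvd : a ∣ P := ⟨p, rfl⟩
      have e1 := Int.emod_emod_of_dvd t hdvd
      have e2 := Int.emod_emod_of_dvd r hdvd
      rw [hmod] at e1
      rw [← e1, e2]
    -- m ≡ m1 mod p
    have hm : t / a = (r % P) / a + p * (t / P) := by
      conv_lhs => rw [show t = P * (t / P) + t % P from (Int.mul_ediv_add_emod t P).symm, hmod]
      rw [show P * (t / P) + r % P = r % P + a * (p * (t / P)) by rw [hP]; ring]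
      rw [Int.add_mul_ediv_left _ _ ha.ne']
    have hmm : (t / a) % p = m1 := by
      rw [hm, Int.add_mul_emod_self_left, hm1]
    set s' : ℤ := (t / a) / p with hs'
    have hs'exact : t / a = m1 + p * s' := by
      conv_lhs => rw [show t / a = p * ((t / a) / p) + (t / a) % p from (Int.mul_ediv_add_emod _ p).symm]
      rw [hmm]; ring
    have hs'nn : 0 ≤ s' := Int.ediv_nonneg hmnn hp.le
    have hUs := hU s' hs'nn
    have htm : a * (t / a) + r % a = t := by
      rw [← hta, mul_comm]
      exact Int.ediv_mul_add_emod t a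
    rw [eval_comp, eval_mul, eval_C, eval_sub, eval_X, eval_C]
    have hcast : (t : ℚ) - ((a * m1 + r % a : ℤ) : ℚ) = (a : ℚ) * p * (s' : ℚ) := by
      have : t - (a * m1 + r % a) = a * p * s' := by
        rw [← htm, hs'exact]; ring
      have h4 := congrArg (fun z : ℤ => (z : ℚ)) this
      push_cast at h4
      push_cast
      linear_combination h4
    rw [hcast, inv_mul_cancel_left₀ (by positivity : ((a : ℚ) * p) ≠ 0)]
    rw [hs'exact]
    exact hUs

theorem quasipolynomial_sum_closure (n : ℕ) (q : ℤ → ℚ) (hq : IsQuasiPolynomial n q)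
    (a : ℤ) (ha : 0 < a) (b : ℤ) :
    ∃ Q : ℤ → ℚ, IsQuasiPolynomial (n + 1) Q ∧
      ∀ t : ℤ, 0 ≤ t →
        (∑ k ∈ Finset.range ((⌊(t : ℚ) / a⌋).toNat + 1), q (b - k)) = Q t := by
  obtain ⟨c, p, hp, hcper, hcq⟩ := hq
  set P : ℤ := a * p with hP
  have hPpos : 0 < P := mul_pos ha hp
  choose W hWdeg hW using fun r => claim_aux hp hcper hcq ha b r
  refine ⟨fun t => (W (t % P)).eval (t : ℚ), ?_, ?_⟩
  · refine ⟨fun i t => (W (t % P)).coeff i, P, hPpos, ?_, ?_⟩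
    · intro i t
      have h1 : (t + P) % P = t % P := by
        conv_lhs => rw [show t + P = t + P * 1 by ring]
        exact Int.add_mul_emod_self_left t P 1
      simp only [h1]
    · intro t
      exact eval_eq_sum_range' (lt_of_le_of_lt (hWdeg (t % P)) (by omega)) _
  · intro t ht
    have hfloor : ⌊(t : ℚ) / (a : ℚ)⌋ = t / a := by
      have h2 : ((a.toNat : ℕ) : ℚ) = (a : ℚ) := by
        exact_mod_cast congrArg (fun z : ℤ => (z : ℚ)) (Int.toNat_of_nonneg ha.le)
      have h3 := Rat.floor_intCast_div_natCast t a.toNat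
      rw [h2] at h3
      rw [Int.toNat_of_nonneg ha.le] at h3
      exact h3
    rw [hfloor]
    exact hW (t % P) t ht (Int.emod_emod_of_dvd t dvd_rfl).symm
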